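/- Let u be the quaternary sequence of length N = 2n generated by Construction I from binary sequences a_0, a_1, a_2, a_3 of odd length n and bits e(0), e(1), e(2). Then for every even shift τ = 2τ_0 with 0 ≤ τ_0 < n, R_u(τ) = [R_{a_0}(τ_0) + R_{a_1}(τ_0) + R_{a_2}(τ_0) + R_{a_3}(τ_0)]/2 + (−1)^{e(1)}[R_{a_0,a_2}(τ_0) − R_{a_2,a_0}(τ_0) + (−1)^{e(0)+e(1)+e(2)}(R_{a_1,a_3}(τ_0) − R_{a_3,a_1}(τ_0))]·ξ/2, where ξ = √−1. -/

import Mathlib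

/-- Cross-correlation of two sequences of length `N` over `ℤ_H`, with `ξ = exp(2πi/H)`. -/
noncomputable def crossCorr (H N : ℕ) (s t : ZMod N → ZMod H) (τ : ZMod N) : ℂ :=
  ∑ i ∈ Finset.range N,
    Complex.exp (2 * (Real.pi : ℂ) * Complex.I / (H : ℂ)) ^ ((s (i : ZMod N) - t ((i : ZMod N) + τ)).val)

/-- Cross-correlation of two binary sequences of length `N` (an integer). -/
def binCorr (N : ℕ) (s t : ZMod N → ZMod 2) (τ : ZMod N) : ℤ :=
  ∑ i ∈ Finset.range N, (-1 : ℤ) ^ ((s (i : ZMod N) + t ((i : ZMod N) + τ)).val)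

/-- Cross-correlation of two quaternary sequences of length `N`, with `ξ = √-1`. -/
noncomputable def quadCorr (N : ℕ) (s t : ZMod N → ZMod 4) (τ : ZMod N) : ℂ :=
  ∑ i ∈ Finset.range N, Complex.I ^ ((s (i : ZMod N) - t ((i : ZMod N) + τ)).val)

/-- Interleaving `u = I(a, b)`: `u(2i) = a(i)`, `u(2i+1) = b(i)`. -/
def interleaveSeq {H : ℕ} (n : ℕ) (a b : ZMod n → ZMod H) : ZMod (2 * n) → ZMod H :=
  fun k => if k.val % 2 = 0 then a ((k.val / 2 : ℕ) : ZMod n) else b ((k.val / 2 : ℕ) : ZMod n)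

/-- The inverse Gray mapping `φ⁻¹ : ℤ₂ × ℤ₂ → ℤ₄`. -/
def grayInv (a b : ZMod 2) : ZMod 4 :=
  if a = 0 then (if b = 0 then 0 else 1) else (if b = 0 then 3 else 2)

/-- Construction I: the quaternary sequence of length `2n` built from
`a₀, a₁, a₂, a₃` and bits `e₀, e₁, e₂`. -/
def constructionI (n : ℕ) (a0 a1 a2 a3 : ZMod n → ZMod 2)
    (e0 e1 e2 : ZMod 2) : ZMod (2 * n) → ZMod 4 :=
  let lam : ZMod n := (((n + 1) / 2 : ℕ) : ZMod n)
  let c := interleaveSeq n a0 (fun i => e0 + a1 (i + lam))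
  let d := interleaveSeq n (fun i => e1 + a2 i) (fun i => e2 + a3 (i + lam))
  fun i => grayInv (c i) (d i)


lemma gray_key (p q p' q' : ZMod 2) :
    (Complex.I) ^ ((grayInv p q - grayInv p' q').val) =
      ((-1:ℂ)^((p+p').val) + (-1:ℂ)^((q+q').val))/2 +
      ((-1:ℂ)^((p+q').val) - (-1:ℂ)^((p'+q).val)) * Complex.I/2 := by
  have h01 : ∀ x : ZMod 2, x = 0 ∨ x = 1 := by decide
  rcases h01 p with rfl | rfl <;> rcases h01 q with rfl | rfl <;>
    rcases h01 p' with rfl | rfl <;> rcases h01 q' with rfl | rfl <;>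
    simp [grayInv] <;>
    norm_num [show ((2:ZMod 2)).val = 0 from rfl, show ((1:ZMod 2)).val = 1 from rfl,
      show ((2:ZMod 4)).val = 2 from rfl, show ((1:ZMod 4)).val = 1 from rfl,
      show ((3:ZMod 4)).val = 3 from rfl, show ((-3:ZMod 4)).val = 1 from rfl,
      show ((-2:ZMod 4)).val = 2 from rfl, show ((-1:ZMod 4)).val = 3 from rfl,
      pow_succ, Complex.I_sq] <;> ring

lemma neg_one_pow_add (p q : ZMod 2) :
    ((-1:ℂ))^((p+q).val) = (-1:ℂ)^(p.val) * (-1:ℂ)^(q.val) := by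
  have h01 : ∀ x : ZMod 2, x = 0 ∨ x = 1 := by decide
  rcases h01 p with rfl | rfl <;> rcases h01 q with rfl | rfl <;>
    norm_num [show ((2:ZMod 2)).val = 0 from rfl, show ((1:ZMod 2)).val = 1 from rfl]

lemma sum_range_two_mul {M : Type*} [AddCommMonoid M] (n : ℕ) (f : ℕ → M) :
    ∑ i ∈ Finset.range (2*n), f i = ∑ k ∈ Finset.range n, (f (2*k) + f (2*k+1)) := by
  induction n with
  | zero => simp
  | succ m ih =>
    have h : 2 * (m+1) = (2*m + 1) + 1 := by ring
    rw [h, Finset.sum_range_succ, Finset.sum_range_succ, ih, Finset.sum_range_succ, add_assoc]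

lemma sum_range_zmod {M : Type*} [AddCommMonoid M] (n : ℕ) [NeZero n] (g : ZMod n → M) :
    ∑ k ∈ Finset.range n, g (k : ZMod n) = ∑ x : ZMod n, g x := by
  refine Finset.sum_nbij' (fun k => (k : ZMod n)) (fun x => x.val) ?_ ?_ ?_ ?_ ?_ <;>
    simp +contextual [ZMod.val_cast_of_lt, ZMod.val_lt, ZMod.natCast_val]
  intro a h
  exact Nat.mod_eq_of_lt h

lemma sum_shift {M : Type*} [AddCommMonoid M] (n : ℕ) [NeZero n] (c : ZMod n) (g : ZMod n → M) :
    ∑ x : ZMod n, g (x + c) = ∑ x : ZMod n, g x :=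
  Fintype.sum_bijective (· + c) (Equiv.addRight c).bijective _ _ (fun _ => rfl)

lemma interleave_apply {H : ℕ} (n : ℕ) [NeZero n] (a b : ZMod n → ZMod H) (m : ℕ) :
    interleaveSeq n a b ((m : ℕ) : ZMod (2*n)) =
      if m % 2 = 0 then a ((m/2 : ℕ) : ZMod n) else b ((m/2 : ℕ) : ZMod n) := by
  have hn : 0 < n := Nat.pos_of_ne_zero (NeZero.ne n)
  haveI : NeZero (2*n) := ⟨by omega⟩
  have hval : ((m : ZMod (2*n))).val = m % (2*n) := ZMod.val_natCast _ m
  have h2 : m % (2*n) % 2 = m % 2 := Nat.mod_mod_of_dvd m ⟨n, rfl⟩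
  have key : m % (2*n) / 2 = m / 2 % n := by
    set q := m/(2*n) with hq
    set r := m % (2*n) with hrdef
    have hd : 2*n*q + r = m := Nat.div_add_mod m (2*n)
    have hr : r < 2*n := Nat.mod_lt m (by omega)
    have e0 : m = r + 2*(n*q) := by rw [← hd]; ring
    have e1 : m / 2 = r / 2 + n*q := by rw [e0]; exact Nat.add_mul_div_left _ _ (by norm_num)
    have e2 : r / 2 < n := by omega
    rw [e1, Nat.add_mul_mod_self_left, Nat.mod_eq_of_lt e2]
  have h3 : ((m % (2*n) / 2 : ℕ) : ZMod n) = ((m / 2 : ℕ) : ZMod n) := by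
    rw [key, ZMod.natCast_mod]
  simp only [interleaveSeq, hval, h2, h3]

lemma interleave_corr (n : ℕ) [NeZero n] (A B A' B' : ZMod n → ZMod 2) (τ0 : ℕ) :
    ∑ i ∈ Finset.range (2*n),
      (-1:ℂ)^((interleaveSeq n A B (i : ZMod (2*n)) +
        interleaveSeq n A' B' ((i : ZMod (2*n)) + ((2*τ0 : ℕ) : ZMod (2*n)))).val)
    = (∑ k ∈ Finset.range n, (-1:ℂ)^((A (k : ZMod n) + A' ((k : ZMod n) + (τ0 : ZMod n))).val))
    + (∑ k ∈ Finset.range n, (-1:ℂ)^((B (k : ZMod n) + B' ((k : ZMod n) + (τ0 : ZMod n))).val)) := by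
  haveI : NeZero (2*n) := ⟨by have := NeZero.ne n; omega⟩
  rw [sum_range_two_mul, ← Finset.sum_add_distrib]
  refine Finset.sum_congr rfl fun k _ => ?_
  have hcast : ∀ m : ℕ, ((m : ZMod (2*n)) + ((2*τ0 : ℕ) : ZMod (2*n))) = (((m + 2*τ0 : ℕ)) : ZMod (2*n)) := fun m => by push_cast; ring
  rw [hcast, hcast, interleave_apply, interleave_apply, interleave_apply, interleave_apply]
  have h1 : (2*k) % 2 = 0 := by omega
  have h2 : (2*k+1) % 2 = 1 := by omega
  have h3 : (2*k + 2*τ0) % 2 = 0 := by omega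
  have h4 : (2*k+1 + 2*τ0) % 2 = 1 := by omega
  have d1 : (2*k)/2 = k := by omega
  have d2 : (2*k+1)/2 = k := by omega
  have d3 : (2*k + 2*τ0)/2 = k + τ0 := by omega
  have d4 : (2*k+1 + 2*τ0)/2 = k + τ0 := by omega
  simp only [h1, h2, h3, h4, d1, d2, d3, d4]
  norm_num

lemma shift_sum (n : ℕ) [NeZero n] (lam τ' : ZMod n) (x y : ZMod n → ZMod 2) :
    ∑ k ∈ Finset.range n, (-1:ℂ)^((x ((k:ZMod n)+lam) + y ((k:ZMod n)+τ'+lam)).val)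
    = ∑ k ∈ Finset.range n, (-1:ℂ)^((x (k:ZMod n) + y ((k:ZMod n)+τ')).val) := by
  rw [sum_range_zmod n (fun z => (-1:ℂ)^((x (z+lam) + y (z+τ'+lam)).val)),
      sum_range_zmod n (fun z => (-1:ℂ)^((x z + y (z+τ')).val))]
  have h : ∀ z : ZMod n, z + τ' + lam = (z + lam) + τ' := fun z => by ring
  simp_rw [h]
  exact sum_shift n lam (fun z => (-1:ℂ)^((x z + y (z+τ')).val))

lemma binCorr_complex (n : ℕ) (s t : ZMod n → ZMod 2) (τ' : ZMod n) :
    ((binCorr n s t τ' : ℤ) : ℂ) = ∑ k ∈ Finset.range n, (-1:ℂ)^((s (k:ZMod n) + t ((k:ZMod n)+τ')).val) := by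
  unfold binCorr
  push_cast
  rfl

lemma quad_expand (N : ℕ) (c d : ZMod N → ZMod 2) (τ : ZMod N) :
    quadCorr N (fun i => grayInv (c i) (d i)) (fun i => grayInv (c i) (d i)) τ =
      ((∑ i ∈ Finset.range N, (-1:ℂ)^((c ↑i + c (↑i+τ)).val)) +
       (∑ i ∈ Finset.range N, (-1:ℂ)^((d ↑i + d (↑i+τ)).val)))/2 +
      ((∑ i ∈ Finset.range N, (-1:ℂ)^((c ↑i + d (↑i+τ)).val)) -
       (∑ i ∈ Finset.range N, (-1:ℂ)^((d ↑i + c (↑i+τ)).val))) * Complex.I/2 := by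
  unfold quadCorr
  have key : ∀ i : ZMod N, (Complex.I) ^ ((grayInv (c i) (d i) - grayInv (c (i+τ)) (d (i+τ))).val) =
      (((-1:ℂ)^((c i + c (i+τ)).val) + (-1:ℂ)^((d i + d (i+τ)).val))/2 +
       ((-1:ℂ)^((c i + d (i+τ)).val) - (-1:ℂ)^((d i + c (i+τ)).val)) * Complex.I/2) := by
    intro i
    rw [add_comm (d i) (c (i+τ))]
    exact gray_key _ _ _ _
  beta_reduce
  refine (Finset.sum_congr rfl (fun i _ => key ((i : ℕ) : ZMod N))).trans ?_
  rw [Finset.sum_add_distrib, ← Finset.sum_div, ← Finset.sum_div, ← Finset.sum_mul,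
      Finset.sum_add_distrib, Finset.sum_sub_distrib]

theorem stmt4 (n : ℕ) (hn : Odd n) (a0 a1 a2 a3 : ZMod n → ZMod 2) (e0 e1 e2 : ZMod 2)
    (u : ZMod (2 * n) → ZMod 4) (hu : u = constructionI n a0 a1 a2 a3 e0 e1 e2)
    (τ0 : ℕ) (hτ0 : τ0 < n) :
    quadCorr (2 * n) u u ((2 * τ0 : ℕ) : ZMod (2 * n)) =
      ((binCorr n a0 a0 (τ0 : ZMod n) + binCorr n a1 a1 (τ0 : ZMod n) +
          binCorr n a2 a2 (τ0 : ZMod n) + binCorr n a3 a3 (τ0 : ZMod n) : ℤ) : ℂ) / 2 +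
        (-1 : ℂ) ^ e1.val *
          (((binCorr n a0 a2 (τ0 : ZMod n) - binCorr n a2 a0 (τ0 : ZMod n) : ℤ) : ℂ) +
            (-1 : ℂ) ^ (e0 + e1 + e2).val *
              ((binCorr n a1 a3 (τ0 : ZMod n) - binCorr n a3 a1 (τ0 : ZMod n) : ℤ) : ℂ)) *
          Complex.I / 2 := by
  have hn0 : 0 < n := hn.pos
  haveI : NeZero n := ⟨hn0.ne'⟩
  haveI : NeZero (2*n) := ⟨by omega⟩
  have hu2 : u = (fun i => grayInv
      (interleaveSeq n a0 (fun j => e0 + a1 (j + (((n + 1) / 2 : ℕ) : ZMod n))) i)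
      (interleaveSeq n (fun j => e1 + a2 j) (fun j => e2 + a3 (j + (((n + 1) / 2 : ℕ) : ZMod n))) i)) := hu
  rw [hu2, quad_expand]
  set lam : ZMod n := (((n + 1) / 2 : ℕ) : ZMod n) with hlam
  rw [interleave_corr n a0 (fun j => e0 + a1 (j + lam)) a0 (fun j => e0 + a1 (j + lam)) τ0,
      interleave_corr n (fun j => e1 + a2 j) (fun j => e2 + a3 (j + lam)) (fun j => e1 + a2 j) (fun j => e2 + a3 (j + lam)) τ0,
      interleave_corr n a0 (fun j => e0 + a1 (j + lam)) (fun j => e1 + a2 j) (fun j => e2 + a3 (j + lam)) τ0,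
      interleave_corr n (fun j => e1 + a2 j) (fun j => e2 + a3 (j + lam)) a0 (fun j => e0 + a1 (j + lam)) τ0]
  have cancel : ∀ (e p q : ZMod 2), (e+p)+(e+q) = p+q := by decide
  have pullL : ∀ (e p q : ZMod 2), p + (e+q) = e + (p+q) := by decide
  have pullR : ∀ (e p q : ZMod 2), (e+p) + q = e + (p+q) := by decide
  have pullB : ∀ (e f p q : ZMod 2), (e+p) + (f+q) = (e+f) + (p+q) := by decide
  simp only [cancel e0, cancel e1, cancel e2, pullL e1, pullR e1, pullB e0 e2, pullB e2 e0]
  simp only [neg_one_pow_add e1, neg_one_pow_add (e0+e2), neg_one_pow_add (e2+e0)]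
  rw [← Finset.mul_sum, ← Finset.mul_sum, ← Finset.mul_sum, ← Finset.mul_sum]
  rw [shift_sum n lam (τ0:ZMod n) a1 a1, shift_sum n lam (τ0:ZMod n) a3 a3,
      shift_sum n lam (τ0:ZMod n) a1 a3, shift_sum n lam (τ0:ZMod n) a3 a1]
  push_cast
  rw [binCorr_complex n a0 a0, binCorr_complex n a1 a1, binCorr_complex n a2 a2,
      binCorr_complex n a3 a3, binCorr_complex n a0 a2, binCorr_complex n a2 a0,
      binCorr_complex n a1 a3, binCorr_complex n a3 a1]
  rw [neg_one_pow_add (e0+e1) e2, neg_one_pow_add e0 e1, neg_one_pow_add e0 e2,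
      neg_one_pow_add e2 e0]
  have hε : (-1:ℂ)^(e1.val) = 1 ∨ (-1:ℂ)^(e1.val) = -1 := by
    rcases (by decide : ∀ x : ZMod 2, x = 0 ∨ x = 1) e1 with h | h <;> rw [h] <;> norm_num [show ((1:ZMod 2)).val = 1 from rfl, show ((0:ZMod 2)).val = 0 from rfl]
  rcases hε with h | h <;> rw [h] <;> ring
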